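/- Let K be a field of characteristic zero, V a K-vector space, G a group, and ρ : G → GL(V) a group homomorphism into the group of linear automorphisms of V. Let S ⊆ G be a subset generating G such that ρ(s) is unipotent (i.e., ρ(s) − id_V is nilpotent) for every s ∈ S, and let H be a subgroup of G of finite index. If v ∈ V satisfies ρ(h) v = v for all h ∈ H, then ρ(g) v = v for all g ∈ G. -/

import Mathlib

open Polynomial Finset

/-- If `u = 1 + N` with `N` nilpotent (over char-zero scalars) and `u ^ k • v = v`
for some `k > 0`, then `u • v = v`. -/
lemma unipotent_fix_of_pow_fix {K : Type*} [Field K] [CharZero K]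
    {V : Type*} [AddCommGroup V] [Module K V]
    (u : Module.End K V) (hnil : IsNilpotent (u - 1))
    {k : ℕ} (hk : 0 < k) {v : V} (hv : (u ^ k) v = v) : u v = v := by
  set p : K[X] := ∑ i ∈ range k, X ^ i with hp
  have heval : p.eval 1 = (k : K) := by
    simp [hp, eval_finset_sum]
  have hroot : (X - C (1 : K)) ∣ (p - C (k : K)) := by
    rw [dvd_iff_isRoot]
    simp [IsRoot, heval]
  obtain ⟨q, hq⟩ := hroot
  have hpq : p = C (k : K) + (X - C 1) * q := by rw [← hq]; ring
  -- evaluate at u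
  have haeval : (aeval u) p = (algebraMap K (Module.End K V)) (k : K)
      + (u - 1) * (aeval u) q := by
    rw [hpq]
    simp [map_add, map_mul, map_sub, aeval_X, aeval_C, Algebra.algebraMap_eq_smul_one]
  have hMnil : IsNilpotent ((u - 1) * (aeval u) q) := by
    have hcomm : Commute (u - 1) ((aeval u) q) := by
      have h1 : Commute u ((aeval u) q) := by
        simpa using ((Commute.all (X : K[X]) q).map (aeval u))
      exact h1.sub_left (Commute.one_left _)
    exact hcomm.isNilpotent_mul_right hnil
  have hkunit : IsUnit ((algebraMap K (Module.End K V)) (k : K)) :=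
    (isUnit_iff_ne_zero.2 (Nat.cast_ne_zero.2 hk.ne')).map _
  have hPunit : IsUnit ((aeval u) p) := by
    rw [haeval]
    exact hMnil.isUnit_add_left_of_commute hkunit
      (Algebra.commute_algebraMap_right _ _)
  -- geometric sum identity
  have hgeom : (aeval u) p * (u - 1) = u ^ k - 1 := by
    have := geom_sum_mul u k
    rw [hp]
    simpa [map_sum, map_pow, aeval_X] using this
  have h0 : ((aeval u) p) ((u - 1) v) = 0 := by
    have : ((aeval u) p * (u - 1)) v = 0 := by
      rw [hgeom]
      simp [LinearMap.sub_apply, hv]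
    simpa [Module.End.mul_apply] using this
  have hinj : Function.Injective ((aeval u) p : Module.End K V) := by
    obtain ⟨w, hw⟩ := hPunit
    intro a b hab
    have : (↑w⁻¹ * (aeval u) p) a = (↑w⁻¹ * (aeval u) p) b := by
      simp [Module.End.mul_apply, hab]
    simpa [← hw, Units.inv_mul] using this
  have : (u - 1) v = 0 := hinj (by simpa using h0)
  have := this
  rw [LinearMap.sub_apply, sub_eq_zero] at this
  simpa using this

/-- Let `ρ : G → GL(V)` be a representation over a field of characteristic zero such
that `G` is generated by a set `S` of elements acting unipotently, and let `H ≤ G` be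
a subgroup of finite index. Then any vector fixed by `H` is fixed by all of `G`. -/
theorem fixed_by_finite_index_of_unipotent_generators
    {K : Type*} [Field K] [CharZero K] {V : Type*} [AddCommGroup V] [Module K V]
    {G : Type*} [Group G] (ρ : G →* (Module.End K V)ˣ)
    (S : Set G) (hS : Subgroup.closure S = ⊤)
    (hunip : ∀ s ∈ S, ∃ m : ℕ, ((ρ s : Module.End K V) - 1) ^ m = 0)
    (H : Subgroup G) (hH : H.FiniteIndex)
    (v : V) (hv : ∀ h ∈ H, (ρ h : Module.End K V) v = v) :
    ∀ g : G, (ρ g : Module.End K V) v = v := by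
  -- the stabilizer of v is a subgroup
  let T : Subgroup G :=
    { carrier := {g : G | (ρ g : Module.End K V) v = v}
      one_mem' := by simp
      mul_mem' := by
        intro a b ha hb
        simp only [Set.mem_setOf_eq, map_mul, Units.val_mul, Module.End.mul_apply] at *
        rw [hb, ha]
      inv_mem' := by
        intro a ha
        simp only [Set.mem_setOf_eq] at *
        have : ((ρ a⁻¹ : (Module.End K V)ˣ) : Module.End K V)
            ((ρ a : Module.End K V) v) = v := by
          rw [← Module.End.mul_apply, ← Units.val_mul, ← map_mul]
          simp
        rwa [ha] at this }
  suffices hT : S ⊆ T by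
    intro g
    have : (Subgroup.closure S : Subgroup G) ≤ T := Subgroup.closure_le T |>.2 hT
    rw [hS] at this
    exact this (Subgroup.mem_top g)
  intro s hs
  show (ρ s : Module.End K V) v = v
  obtain ⟨m, hm⟩ := hunip s hs
  -- find k > 0 with s ^ k ∈ H
  obtain ⟨k, hk, -, hkH⟩ := Subgroup.exists_pow_mem_of_index_ne_zero hH.index_ne_zero s
  have hpow : (((ρ s : Module.End K V)) ^ k) v = v := by
    have := hv (s ^ k) hkH
    rwa [map_pow, Units.val_pow_eq_pow_val] at this
  exact unipotent_fix_of_pow_fix (ρ s : Module.End K V) ⟨m, hm⟩ hk hpow
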